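/- arXiv:2205.10722 — 2 statements merged into one kernel-verified Lean document; each statement's English description precedes it below -/
import Mathlib

section
/- Let f, β, γ ∈ B. Let ∂βx, ∂γy, ∂'x, ∂'y be K-derivations on B killing all constant letters ι(Sum.inl c) and satisfying: ∂βx(x) = β, ∂βx(y) = 0; ∂γy(y) = γ, ∂γy(x) = 0; ∂'x(x) = ∂γy(β), ∂'x(y) = 0; ∂'y(y) = ∂βx(γ), ∂'y(x) = 0. Then ∂γy(∂βx(f)) − ∂βx(∂γy(f)) = ∂'x(f) − ∂'y(f). (Proposition 2.3, second identity: the noncommutative analogue of Clairaut's theorem, ∂²f/∂_γy∂_βx − ∂²f/∂_βx∂_γy = ∂f/∂_{(∂β/∂_γy)}x − ∂f/∂_{(∂γ/∂_βx)}y.) -/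
/-- Proposition 2.3, second identity: noncommutative Clairaut theorem
`∂²f/∂_γy∂_βx − ∂²f/∂_βx∂_γy = ∂f/∂_{(∂β/∂_γy)}x − ∂f/∂_{(∂γ/∂_βx)}y`. -/
theorem noncomm_clairaut
    (K : Type*) [Field K] [CharZero K] (C : Type*)
    (f β γ : FreeAlgebra K (C ⊕ Fin 2))
    (Dβx Dγy D'x D'y : FreeAlgebra K (C ⊕ Fin 2) →ₗ[K] FreeAlgebra K (C ⊕ Fin 2))
    (hβxLeib : ∀ a b, Dβx (a * b) = Dβx a * b + a * Dβx b)
    (hγyLeib : ∀ a b, Dγy (a * b) = Dγy a * b + a * Dγy b)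
    (h'xLeib : ∀ a b, D'x (a * b) = D'x a * b + a * D'x b)
    (h'yLeib : ∀ a b, D'y (a * b) = D'y a * b + a * D'y b)
    (hβxc : ∀ c : C, Dβx (FreeAlgebra.ι K (Sum.inl c)) = 0)
    (hγyc : ∀ c : C, Dγy (FreeAlgebra.ι K (Sum.inl c)) = 0)
    (h'xc : ∀ c : C, D'x (FreeAlgebra.ι K (Sum.inl c)) = 0)
    (h'yc : ∀ c : C, D'y (FreeAlgebra.ι K (Sum.inl c)) = 0)
    (hβx_x : Dβx (FreeAlgebra.ι K (Sum.inr 0)) = β)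
    (hβx_y : Dβx (FreeAlgebra.ι K (Sum.inr 1)) = 0)
    (hγy_y : Dγy (FreeAlgebra.ι K (Sum.inr 1)) = γ)
    (hγy_x : Dγy (FreeAlgebra.ι K (Sum.inr 0)) = 0)
    (h'x_x : D'x (FreeAlgebra.ι K (Sum.inr 0)) = Dγy β)
    (h'x_y : D'x (FreeAlgebra.ι K (Sum.inr 1)) = 0)
    (h'y_y : D'y (FreeAlgebra.ι K (Sum.inr 1)) = Dβx γ)
    (h'y_x : D'y (FreeAlgebra.ι K (Sum.inr 0)) = 0) :
    Dγy (Dβx f) - Dβx (Dγy f) = D'x f - D'y f := by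
  have hone : ∀ (D : FreeAlgebra K (C ⊕ Fin 2) →ₗ[K] FreeAlgebra K (C ⊕ Fin 2)),
      (∀ a b, D (a * b) = D a * b + a * D b) → ∀ r : K,
      D (algebraMap K (FreeAlgebra K (C ⊕ Fin 2)) r) = 0 := by
    intro D hD r
    have h1 : D 1 = 0 := by
      have := hD 1 1
      simp only [one_mul, mul_one] at this
      exact right_eq_add.mp this
    have : algebraMap K (FreeAlgebra K (C ⊕ Fin 2)) r = r • 1 := by
      simp [Algebra.smul_def]
    rw [this, map_smul, h1, smul_zero]
  induction f using FreeAlgebra.induction with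
  | grade0 r =>
    rw [hone Dβx hβxLeib, hone Dγy hγyLeib, hone D'x h'xLeib, hone D'y h'yLeib,
      map_zero, map_zero]
  | grade1 i =>
    rcases i with c | j
    · rw [hβxc, hγyc, h'xc, h'yc, map_zero, map_zero]
    · fin_cases j <;> simp only [Fin.zero_eta, Fin.mk_one, Fin.isValue]
      · rw [hβx_x, hγy_x, h'x_x, h'y_x, map_zero]
      · rw [hβx_y, hγy_y, h'x_y, h'y_y, map_zero]
  | add a b ha hb =>
    simp only [map_add]
    linear_combination (norm := abel) ha + hb
  | mul a b ha hb =>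
    rw [hβxLeib, hγyLeib, map_add, map_add, hγyLeib, hγyLeib, hβxLeib, hβxLeib,
      h'xLeib, h'yLeib]
    have h1 : Dγy (Dβx a) - Dβx (Dγy a) = D'x a - D'y a := ha
    have h2 : Dγy (Dβx b) - Dβx (Dγy b) = D'x b - D'y b := hb
    have e1 : Dγy (Dβx a) = D'x a - D'y a + Dβx (Dγy a) := by
      linear_combination (norm := noncomm_ring) h1
    have e2 : Dγy (Dβx b) = D'x b - D'y b + Dβx (Dγy b) := by
      linear_combination (norm := noncomm_ring) h2
    rw [e1, e2]
    noncomm_ring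
end

section
/- Let f, β, u, v ∈ B. Let σ : B →ₐ[K] B be the K-algebra homomorphism with σ(x) = u, σ(y) = v, and σ(ι(Sum.inl c)) = ι(Sum.inl c) for every constant letter c. Let ∂βx be a K-derivation on B with ∂βx(x) = β, ∂βx(y) = 0, and ∂βx(ι(Sum.inl c)) = 0 for all constants c. Let Δ₁, Δ₂ : B → B be K-linear maps satisfying the σ-twisted Leibniz rule Δᵢ(ab) = Δᵢ(a)·σ(b) + σ(a)·Δᵢ(b) for all a, b ∈ B, with Δ₁(x) = ∂βx(u), Δ₁(y) = 0, Δ₂(x) = 0, Δ₂(y) = ∂βx(v), and Δᵢ(ι(Sum.inl c)) = 0 for all constants c. Then ∂βx(σ(f)) = Δ₁(f) + Δ₂(f). (Proposition 2.3, first identity: the noncommutative multi-variable chain rule ∂(f(u,v))/∂_βx = ∂(f(u,v))/∂_{(∂u/∂_βx)}u + ∂(f(u,v))/∂_{(∂v/∂_βx)}v.) -/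
/-- Proposition 2.3, first identity: the noncommutative multi-variable chain rule
`∂(f(u,v))/∂_βx = ∂(f(u,v))/∂_{(∂u/∂_βx)}u + ∂(f(u,v))/∂_{(∂v/∂_βx)}v`. -/
theorem noncomm_chain_rule
    (K : Type*) [Field K] [CharZero K] (C : Type*)
    (f β u v : FreeAlgebra K (C ⊕ Fin 2))
    (σ : FreeAlgebra K (C ⊕ Fin 2) →ₐ[K] FreeAlgebra K (C ⊕ Fin 2))
    (hσx : σ (FreeAlgebra.ι K (Sum.inr 0)) = u)
    (hσy : σ (FreeAlgebra.ι K (Sum.inr 1)) = v)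
    (hσc : ∀ c : C, σ (FreeAlgebra.ι K (Sum.inl c)) = FreeAlgebra.ι K (Sum.inl c))
    (Dβx : FreeAlgebra K (C ⊕ Fin 2) →ₗ[K] FreeAlgebra K (C ⊕ Fin 2))
    (hβxLeib : ∀ a b, Dβx (a * b) = Dβx a * b + a * Dβx b)
    (hβx_x : Dβx (FreeAlgebra.ι K (Sum.inr 0)) = β)
    (hβx_y : Dβx (FreeAlgebra.ι K (Sum.inr 1)) = 0)
    (hβxc : ∀ c : C, Dβx (FreeAlgebra.ι K (Sum.inl c)) = 0)
    (Δ₁ Δ₂ : FreeAlgebra K (C ⊕ Fin 2) →ₗ[K] FreeAlgebra K (C ⊕ Fin 2))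
    (hΔ₁Leib : ∀ a b, Δ₁ (a * b) = Δ₁ a * σ b + σ a * Δ₁ b)
    (hΔ₂Leib : ∀ a b, Δ₂ (a * b) = Δ₂ a * σ b + σ a * Δ₂ b)
    (hΔ₁x : Δ₁ (FreeAlgebra.ι K (Sum.inr 0)) = Dβx u)
    (hΔ₁y : Δ₁ (FreeAlgebra.ι K (Sum.inr 1)) = 0)
    (hΔ₂x : Δ₂ (FreeAlgebra.ι K (Sum.inr 0)) = 0)
    (hΔ₂y : Δ₂ (FreeAlgebra.ι K (Sum.inr 1)) = Dβx v)
    (hΔ₁c : ∀ c : C, Δ₁ (FreeAlgebra.ι K (Sum.inl c)) = 0)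
    (hΔ₂c : ∀ c : C, Δ₂ (FreeAlgebra.ι K (Sum.inl c)) = 0) :
    Dβx (σ f) = Δ₁ f + Δ₂ f := by
  have hD1 : Dβx 1 = 0 := by
    have h := hβxLeib 1 1
    simp at h
    exact h
  induction f using FreeAlgebra.induction with
  | grade0 r =>
      have h1 : (algebraMap K (FreeAlgebra K (C ⊕ Fin 2)) r) = r • (1 : FreeAlgebra K (C ⊕ Fin 2)) := by
        simp [Algebra.smul_def]
      have hΔ1 : Δ₁ 1 = 0 := by
        have h := hΔ₁Leib 1 1; simp at h; exact h
      have hΔ2 : Δ₂ 1 = 0 := by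
        have h := hΔ₂Leib 1 1; simp at h; exact h
      rw [σ.commutes, h1, map_smul, map_smul, map_smul, hD1, hΔ1, hΔ2]; simp
  | grade1 z =>
      rcases z with c | i
      · rw [hσc c, hβxc c, hΔ₁c c, hΔ₂c c]; simp
      · fin_cases i
        · show Dβx (σ (FreeAlgebra.ι K (Sum.inr 0))) = Δ₁ (FreeAlgebra.ι K (Sum.inr 0)) + Δ₂ (FreeAlgebra.ι K (Sum.inr 0))
          rw [hσx, hΔ₁x, hΔ₂x]; simp
        · show Dβx (σ (FreeAlgebra.ι K (Sum.inr 1))) = Δ₁ (FreeAlgebra.ι K (Sum.inr 1)) + Δ₂ (FreeAlgebra.ι K (Sum.inr 1))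
          rw [hσy, hΔ₁y, hΔ₂y]; simp
  | mul a b ha hb =>
      rw [map_mul, hβxLeib, ha, hb, hΔ₁Leib, hΔ₂Leib]
      noncomm_ring
  | add a b ha hb =>
      rw [map_add, map_add, map_add, map_add, ha, hb]
      abel
end
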